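/- Binomial identity for truncated sums of elementary symmetric polynomials of shifted variables: for integers 1 ≤ k ≤ n and 1 ≤ ℓ ≤ n, one has Σ_{s=n−k+1}^{ℓ} (-1)^s binom(n−s, ℓ−s) e_{s+k−n}(1−z_1,…,1−z_k) = (-1)^{n−k+1} ( binom(k, ℓ+k−n) − e_{ℓ+k−n}(z) ) in ℤ[z_1,…,z_k], where the sum is empty if ℓ ≤ n−k. -/

import Mathlib

open Finset MvPolynomial

noncomputable section

/-- The elementary symmetric polynomial `e_r` of a family of ring elements. -/
def esymmF {R : Type*} [CommRing R] {m : ℕ} (f : Fin m → R) (r : ℕ) : R :=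
  ∑ t ∈ Finset.powersetCard r Finset.univ, ∏ j ∈ t, f j

/-- `e_r(z)` in `ℤ[z_1,…,z_k]`. -/
def eP (k : ℕ) (r : ℕ) : MvPolynomial (Fin k) ℤ :=
  esymmF (fun i => X i) r

/-- `e_r(1−z_1,…,1−z_k)` in `ℤ[z_1,…,z_k]`. -/
def ePOneSub (k : ℕ) (r : ℕ) : MvPolynomial (Fin k) ℤ :=
  esymmF (fun i : Fin k => 1 - X i) r

lemma count_supersets {k t : ℕ} (T : Finset (Fin k)) (hT : T.card ≤ t) :
    (((Finset.powersetCard t (Finset.univ : Finset (Fin k)))).filter (fun S => T ⊆ S)).card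
      = (k - T.card).choose (t - T.card) := by
  have hTc : Tᶜ.card = k - T.card := by
    rw [Finset.card_compl, Fintype.card_fin]
  rw [← hTc, ← Finset.card_powersetCard]
  apply Finset.card_bij' (fun S _ => S \ T) (fun U _ => U ∪ T)
  · intro S hS
    simp only [Finset.mem_filter, Finset.mem_powersetCard] at hS
    obtain ⟨⟨_, hcard⟩, hTS⟩ := hS
    rw [Finset.mem_powersetCard]
    refine ⟨fun x hx => ?_, ?_⟩
    · simp only [Finset.mem_sdiff] at hx
      simp [Finset.mem_compl, hx.2]
    · rw [Finset.card_sdiff_of_subset hTS, hcard]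
  · intro U hU
    rw [Finset.mem_powersetCard] at hU
    obtain ⟨hUc, hUcard⟩ := hU
    have hdisj : Disjoint U T := by
      refine Finset.disjoint_left.mpr fun a haU haT => ?_
      exact (Finset.mem_compl.mp (hUc haU)) haT
    simp only [Finset.mem_filter, Finset.mem_powersetCard]
    refine ⟨⟨Finset.subset_univ _, ?_⟩, Finset.subset_union_right⟩
    rw [Finset.card_union_of_disjoint hdisj, hUcard]
    omega
  · intro S hS
    simp only [Finset.mem_filter] at hS
    exact Finset.sdiff_union_of_subset hS.2
  · intro U hU
    rw [Finset.mem_powersetCard] at hU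
    have hdisj : Disjoint U T := by
      refine Finset.disjoint_left.mpr fun a haU haT => ?_
      exact (Finset.mem_compl.mp (hU.1 haU)) haT
    rw [Finset.union_sdiff_right, Finset.sdiff_eq_self_of_disjoint hdisj]


lemma filter_empty_of_big {k t : ℕ} (T : Finset (Fin k)) (hT : t < T.card) :
    ((Finset.powersetCard t (Finset.univ : Finset (Fin k))).filter (fun S => T ⊆ S)) = ∅ := by
  rw [Finset.filter_eq_empty_iff]
  intro S hS hTS
  rw [Finset.mem_powersetCard] at hS
  have := Finset.card_le_card hTS
  omega

lemma ePOneSub_eq (k t : ℕ) (ht : t ≤ k) :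
    ePOneSub k t = ∑ j ∈ Finset.range (t + 1),
      (-1) ^ j * ((k - j).choose (t - j) : MvPolynomial (Fin k) ℤ) * eP k j := by
  unfold ePOneSub esymmF
  have step1 : ∀ S : Finset (Fin k), (∏ i ∈ S, (1 - X i : MvPolynomial (Fin k) ℤ))
      = ∑ T ∈ S.powerset, ∏ i ∈ T, (-(X i) : MvPolynomial (Fin k) ℤ) := by
    intro S
    calc ∏ i ∈ S, (1 - X i : MvPolynomial (Fin k) ℤ)
        = ∏ i ∈ S, (-(X i) + 1) := Finset.prod_congr rfl fun i _ => by ring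
      _ = ∑ T ∈ S.powerset, (∏ i ∈ T, -(X i)) * ∏ i ∈ S \ T, 1 := Finset.prod_add _ _ S
      _ = ∑ T ∈ S.powerset, ∏ i ∈ T, -(X i) := by simp
  rw [Finset.sum_congr rfl fun S _ => step1 S]
  rw [Finset.sum_comm' (s' := fun T => (Finset.powersetCard t (Finset.univ : Finset (Fin k))).filter
        (fun S => T ⊆ S)) (t' := (Finset.univ : Finset (Fin k)).powerset)
      (f := fun _ T => ∏ i ∈ T, (-(X i) : MvPolynomial (Fin k) ℤ))
      (by
        intro S T
        simp only [Finset.mem_filter, Finset.mem_powerset, Finset.mem_powersetCard]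
        constructor
        · rintro ⟨hS, hTS⟩; exact ⟨⟨hS, hTS⟩, Finset.subset_univ _⟩
        · rintro ⟨⟨hS, hTS⟩, _⟩; exact ⟨hS, hTS⟩)]
  simp_rw [Finset.sum_const]
  rw [Finset.sum_powerset]
  rw [Finset.card_univ, Fintype.card_fin]
  rw [← Finset.sum_subset (Finset.range_subset_range.mpr (by omega : t + 1 ≤ k + 1))
      (fun j hj hjt => ?_)]
  · refine Finset.sum_congr rfl fun j hj => ?_
    rw [Finset.mem_range] at hj
    rw [eP]
    unfold esymmF
    rw [Finset.mul_sum]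
    refine Finset.sum_congr rfl fun T hT => ?_
    rw [Finset.mem_powersetCard] at hT
    rw [count_supersets T (by omega : T.card ≤ t), hT.2]
    have : ∏ i ∈ T, (-(X i) : MvPolynomial (Fin k) ℤ)
        = (-1) ^ T.card * ∏ i ∈ T, (X i : MvPolynomial (Fin k) ℤ) := by
      rw [← Finset.prod_const, ← Finset.prod_mul_distrib]
      exact Finset.prod_congr rfl fun i _ => by ring
    rw [this, hT.2, nsmul_eq_mul]
    ring
  · rw [Finset.mem_range] at hj
    rw [Finset.mem_range, not_lt] at hjt
    refine Finset.sum_eq_zero fun T hT => ?_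
    rw [Finset.mem_powersetCard] at hT
    rw [filter_empty_of_big T (by omega)]
    simp

lemma eP_zero (k : ℕ) : eP k 0 = 1 := by
  simp [eP, esymmF]

lemma ePOneSub_zero (k : ℕ) : ePOneSub k 0 = 1 := by
  simp [ePOneSub, esymmF]

lemma myInnerSum (k m j : ℕ) (hm : m ≤ k) (hj : j ≤ m) :
    (∑ t ∈ Finset.Icc j m,
        (-1 : ℤ) ^ t * ((k - t).choose (m - t) : ℤ) * ((k - j).choose (t - j) : ℤ))
      = if j = m then (-1) ^ m else 0 := by
  rw [← Finset.Ico_add_one_right_eq_Icc, Finset.sum_Ico_eq_sum_range]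
  have hrange : m + 1 - j = (m - j) + 1 := by omega
  rw [hrange]
  have hterm : ∀ u ∈ Finset.range (m - j + 1),
      (-1 : ℤ) ^ (j + u) * ((k - (j + u)).choose (m - (j + u)) : ℤ)
          * ((k - j).choose (j + u - j) : ℤ)
        = (-1 : ℤ) ^ j * ((k - j).choose (m - j) : ℤ)
          * ((-1 : ℤ) ^ u * ((m - j).choose u : ℤ)) := by
    intro u hu
    rw [Finset.mem_range] at hu
    have h1 : j + u - j = u := by omega
    have h2 : k - (j + u) = (k - j) - u := by omega
    have h3 : m - (j + u) = (m - j) - u := by omega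
    rw [h1, h2, h3, pow_add]
    have hmul := Nat.choose_mul (n := k - j) (k := m - j) (s := u)
      (by omega)
    have : ((k - j).choose (m - j) * (m - j).choose u : ℤ)
        = ((k - j).choose u * ((k - j - u).choose (m - j - u)) : ℤ) := by
      exact_mod_cast congrArg (Nat.cast (R := ℤ)) hmul
    push_cast at this ⊢
    linear_combination (-((-1 : ℤ) ^ j * (-1) ^ u)) * this
  rw [Finset.sum_congr rfl hterm, ← Finset.mul_sum, Int.alternating_sum_range_choose]
  by_cases hjm : j = m
  · subst hjm
    simp
  · have : m - j ≠ 0 := by omega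
    simp [this, hjm]

lemma key (k m : ℕ) (hm : m ≤ k) :
    ∑ t ∈ Finset.range (m + 1),
        (-1) ^ t * ((k - t).choose (m - t) : MvPolynomial (Fin k) ℤ) * ePOneSub k t
      = eP k m := by
  have hA : ∀ t ∈ Finset.range (m + 1),
      (-1) ^ t * ((k - t).choose (m - t) : MvPolynomial (Fin k) ℤ) * ePOneSub k t
        = ∑ j ∈ Finset.range (t + 1),
            (-1) ^ t * ((k - t).choose (m - t) : MvPolynomial (Fin k) ℤ)
              * ((-1) ^ j * ((k - j).choose (t - j) : MvPolynomial (Fin k) ℤ) * eP k j) := by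
    intro t ht
    rw [Finset.mem_range] at ht
    rw [ePOneSub_eq k t (by omega), Finset.mul_sum]
  rw [Finset.sum_congr rfl hA]
  rw [Finset.sum_comm' (s' := fun j => Finset.Icc j m) (t' := Finset.range (m + 1))
      (by
        intro t j
        simp only [Finset.mem_range, Finset.mem_Icc]
        omega)]
  have hout : ∀ j ∈ Finset.range (m + 1),
      (∑ t ∈ Finset.Icc j m,
          (-1) ^ t * ((k - t).choose (m - t) : MvPolynomial (Fin k) ℤ)
            * ((-1) ^ j * ((k - j).choose (t - j) : MvPolynomial (Fin k) ℤ) * eP k j))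
        = if j = m then eP k m else 0 := by
    intro j hj
    rw [Finset.mem_range] at hj
    have hterms : ∀ t ∈ Finset.Icc j m,
        (-1) ^ t * ((k - t).choose (m - t) : MvPolynomial (Fin k) ℤ)
            * ((-1) ^ j * ((k - j).choose (t - j) : MvPolynomial (Fin k) ℤ) * eP k j)
          = (((-1 : ℤ) ^ t * ((k - t).choose (m - t) : ℤ) * ((k - j).choose (t - j) : ℤ)
              : ℤ) : MvPolynomial (Fin k) ℤ) * ((-1) ^ j * eP k j) := by
      intro t ht
      push_cast
      ring
    rw [Finset.sum_congr rfl hterms, ← Finset.sum_mul, ← Int.cast_sum,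
      myInnerSum k m j hm (by omega)]
    by_cases hjm : j = m
    · subst hjm
      simp only [if_pos rfl]
      push_cast
      rw [← mul_assoc, ← mul_pow]
      norm_num
    · simp [hjm]
  rw [Finset.sum_congr rfl hout]
  simp


/-- Binomial identity for truncated sums of elementary symmetric polynomials of
shifted variables: for `1 ≤ k ≤ n` and `1 ≤ ℓ ≤ n`,
`Σ_{s=n−k+1}^{ℓ} (-1)^s binom(n−s, ℓ−s) e_{s+k−n}(1−z)
  = (-1)^{n−k+1} (binom(k, ℓ+k−n) − e_{ℓ+k−n}(z))`
(the sum being empty for `ℓ ≤ n−k`; indices `ℓ+k−n < 0` are interpreted as `0`,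
which is rendered here by truncated natural subtraction, both sides then vanishing). -/
theorem truncated_esymm_shift (n k : ℕ) (hk : 1 ≤ k) (hkn : k ≤ n)
    (ℓ : ℕ) (hℓ1 : 1 ≤ ℓ) (hℓn : ℓ ≤ n) :
    ∑ s ∈ Finset.Icc (n - k + 1) ℓ,
        (-1) ^ s * (Nat.choose (n - s) (ℓ - s) : MvPolynomial (Fin k) ℤ)
          * ePOneSub k (s + k - n)
      = (-1) ^ (n - k + 1)
          * ((Nat.choose k (ℓ + k - n) : MvPolynomial (Fin k) ℤ) - eP k (ℓ + k - n)) := by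
  by_cases hcase : ℓ + k ≤ n
  · have hempty : Finset.Icc (n - k + 1) ℓ = ∅ := by
      apply Finset.Icc_eq_empty
      omega
    have hm0 : ℓ + k - n = 0 := by omega
    rw [hempty, hm0, eP_zero]
    simp
  · push_neg at hcase
    set m := ℓ + k - n with hmdef
    have hm1 : 1 ≤ m := by omega
    have hmk : m ≤ k := by omega
    have hre : ∑ s ∈ Finset.Icc (n - k + 1) ℓ,
        (-1) ^ s * (Nat.choose (n - s) (ℓ - s) : MvPolynomial (Fin k) ℤ)
          * ePOneSub k (s + k - n)
      = ∑ t ∈ Finset.Icc 1 m,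
          (-1) ^ (t + (n - k)) * ((k - t).choose (m - t) : MvPolynomial (Fin k) ℤ)
            * ePOneSub k t := by
      refine Finset.sum_bij' (fun s _ => s - (n - k)) (fun t _ => t + (n - k))
        ?_ ?_ ?_ ?_ ?_
      · intro s hs
        rw [Finset.mem_Icc] at hs ⊢
        omega
      · intro t ht
        rw [Finset.mem_Icc] at ht ⊢
        omega
      · intro s hs
        rw [Finset.mem_Icc] at hs
        omega
      · intro t ht
        rw [Finset.mem_Icc] at ht
        omega
      · intro s hs
        rw [Finset.mem_Icc] at hs
        have h1 : s - (n - k) + (n - k) = s := by omega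
        have h2 : n - s = k - (s - (n - k)) := by omega
        have h3 : ℓ - s = m - (s - (n - k)) := by omega
        have h4 : s + k - n = s - (n - k) := by omega
        rw [h1, h2, h3, h4]
    rw [hre]
    have hfact : ∀ t ∈ Finset.Icc 1 m,
        (-1) ^ (t + (n - k)) * ((k - t).choose (m - t) : MvPolynomial (Fin k) ℤ)
            * ePOneSub k t
          = (-1) ^ (n - k) * ((-1) ^ t * ((k - t).choose (m - t) : MvPolynomial (Fin k) ℤ)
              * ePOneSub k t) := by
      intro t ht
      rw [pow_add]
      ring
    rw [Finset.sum_congr rfl hfact, ← Finset.mul_sum]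
    have hins : Finset.range (m + 1) = insert 0 (Finset.Icc 1 m) := by
      ext x
      simp only [Finset.mem_range, Finset.mem_insert, Finset.mem_Icc]
      omega
    have hkey := key k m hmk
    rw [hins, Finset.sum_insert (by simp)] at hkey
    simp only [pow_zero, Nat.sub_zero, ePOneSub_zero, one_mul, mul_one] at hkey
    have hIcc : ∑ t ∈ Finset.Icc 1 m,
        (-1) ^ t * ((k - t).choose (m - t) : MvPolynomial (Fin k) ℤ) * ePOneSub k t
      = eP k m - (Nat.choose k m : MvPolynomial (Fin k) ℤ) := by
      linear_combination hkey
    rw [hIcc, pow_succ]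
    ring

end
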